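/- Assume the system is globally solvable at the Fourier coefficient level. If (f_1,…,f_ℓ) is an admissible family in which every f_r has GS-decay, then there exists u : ℤ^m×ℕ → ℂ with GS-decay such that σ_r(τ,j)·u(τ,j) = f_r(τ,j) for all 1 ≤ r ≤ ℓ and all (τ,j) (i.e., the solution can be taken to be a 'strong' solution, corresponding to an element of S_{σ,μ}). -/

import Mathlib

open Real

/-- Euclidean norm of an integer vector `τ ∈ ℤ^m`. -/
noncomputable def eNormZ {m : ℕ} (τ : Fin m → ℤ) : ℝ :=
  Real.sqrt (∑ i, ((τ i : ℝ)) ^ 2)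

/-- The weight `w(τ,j) = ‖τ‖^(1/σ) + j^(1/(2nμ))`. -/
noncomputable def wgt (m n : ℕ) (σ μ : ℝ) (τ : Fin m → ℤ) (j : ℕ) : ℝ :=
  eNormZ τ ^ (1 / σ) + (j : ℝ) ^ (1 / (2 * n * μ))

/-- GS-decay: `|a(τ,j)| ≤ C exp(-ε w(τ,j))` for some `C, ε > 0`. -/
def GSDecay (m n : ℕ) (σ μ : ℝ) (a : (Fin m → ℤ) → ℕ → ℂ) : Prop :=
  ∃ C > 0, ∃ ε > 0, ∀ τ j, ‖a τ j‖ ≤ C * Real.exp (-ε * wgt m n σ μ τ j)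

/-- GS-growth: for all `ε > 0` there is `C > 0` with `|a(τ,j)| ≤ C exp(ε w(τ,j))`. -/
def GSGrowth (m n : ℕ) (σ μ : ℝ) (a : (Fin m → ℤ) → ℕ → ℂ) : Prop :=
  ∀ ε > 0, ∃ C > 0, ∀ τ j, ‖a τ j‖ ≤ C * Real.exp (ε * wgt m n σ μ τ j)

/-- Symbol of the operator `L_r = Q_r(D_t) + d_r P(x,D_x)`: `σ_r(τ,j) = Q_r(τ) + d_r λ_j`. -/
noncomputable def symb {m ℓ : ℕ} (Q : Fin ℓ → MvPolynomial (Fin m) ℂ)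
    (d : Fin ℓ → ℂ) (lam : ℕ → ℝ) (r : Fin ℓ) (τ : Fin m → ℤ) (j : ℕ) : ℂ :=
  MvPolynomial.eval (fun i => ((τ i : ℂ))) (Q r) + d r * (lam j : ℂ)

/-- `‖σ(τ,j)‖ = max_{1 ≤ r ≤ ℓ} |σ_r(τ,j)|`. -/
noncomputable def symbNorm {m ℓ : ℕ} (Q : Fin ℓ → MvPolynomial (Fin m) ℂ)
    (d : Fin ℓ → ℂ) (lam : ℕ → ℝ) (τ : Fin m → ℤ) (j : ℕ) : ℝ :=
  ⨆ r : Fin ℓ, ‖symb Q d lam r τ j‖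

/-- The Diophantine condition (DC). -/
def DioCond (m n ℓ : ℕ) (σ μ : ℝ) (Q : Fin ℓ → MvPolynomial (Fin m) ℂ)
    (d : Fin ℓ → ℂ) (lam : ℕ → ℝ) : Prop :=
  ∀ ε > 0, ∃ C > 0, ∀ τ j, symbNorm Q d lam τ j ≠ 0 →
    symbNorm Q d lam τ j ≥ C * Real.exp (-ε * wgt m n σ μ τ j)

/-- Global hypoellipticity at the Fourier coefficient level. -/
def GloballyHypoelliptic (m n ℓ : ℕ) (σ μ : ℝ) (Q : Fin ℓ → MvPolynomial (Fin m) ℂ)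
    (d : Fin ℓ → ℂ) (lam : ℕ → ℝ) : Prop :=
  ∀ u : (Fin m → ℤ) → ℕ → ℂ, GSGrowth m n σ μ u →
    (∀ r : Fin ℓ, GSDecay m n σ μ (fun τ j => symb Q d lam r τ j * u τ j)) →
    GSDecay m n σ μ u

/-- Admissible families (compatibility conditions). -/
def Admissible {m ℓ : ℕ} (Q : Fin ℓ → MvPolynomial (Fin m) ℂ) (d : Fin ℓ → ℂ)
    (lam : ℕ → ℝ) (f : Fin ℓ → (Fin m → ℤ) → ℕ → ℂ) : Prop :=
  (∀ r s τ j, symb Q d lam r τ j * f s τ j = symb Q d lam s τ j * f r τ j) ∧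
  (∀ r τ j, symb Q d lam r τ j = 0 → f r τ j = 0)

/-- Global solvability at the Fourier coefficient level. -/
def GloballySolvable (m n ℓ : ℕ) (σ μ : ℝ) (Q : Fin ℓ → MvPolynomial (Fin m) ℂ)
    (d : Fin ℓ → ℂ) (lam : ℕ → ℝ) : Prop :=
  ∀ f : Fin ℓ → (Fin m → ℤ) → ℕ → ℂ, Admissible Q d lam f →
    (∀ r, GSGrowth m n σ μ (f r)) →
    ∃ u : (Fin m → ℤ) → ℕ → ℂ, GSGrowth m n σ μ u ∧
      ∀ r τ j, symb Q d lam r τ j * u τ j = f r τ j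

/-- if the system is globally solvable and the admissible data have
GS-decay, then a solution with GS-decay (a strong solution) exists. -/
theorem statement7 (m n ℓ : ℕ) (hm : 1 ≤ m) (hn : 1 ≤ n) (hℓ : 1 ≤ ℓ)
    (σ μ : ℝ) (hσ : 1 ≤ σ) (hμ : 1 / 2 ≤ μ)
    (Q : Fin ℓ → MvPolynomial (Fin m) ℂ) (d : Fin ℓ → ℂ) (lam : ℕ → ℝ)
    (hGS : GloballySolvable m n ℓ σ μ Q d lam)
    (f : Fin ℓ → (Fin m → ℤ) → ℕ → ℂ) (hf : Admissible Q d lam f)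
    (hfdec : ∀ r, GSDecay m n σ μ (f r)) :
    ∃ u : (Fin m → ℤ) → ℕ → ℂ, GSDecay m n σ μ u ∧
      ∀ r τ j, symb Q d lam r τ j * u τ j = f r τ j := by
  classical
  have hw : ∀ τ j, 0 ≤ wgt m n σ μ τ j := by
    intro τ j
    have h1 : 0 ≤ eNormZ τ ^ (1 / σ) := Real.rpow_nonneg (Real.sqrt_nonneg _) _
    have h2 : 0 ≤ (j : ℝ) ^ (1 / (2 * n * μ)) := Real.rpow_nonneg (Nat.cast_nonneg _) _
    exact add_nonneg h1 h2
  choose C hC ε hε hbd using hfdec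
  have hne : Nonempty (Fin ℓ) := ⟨⟨0, hℓ⟩⟩
  set ε0 : ℝ := Finset.univ.inf' (Finset.univ_nonempty) ε with hε0
  have hε0pos : 0 < ε0 := by
    rw [hε0]
    exact (Finset.lt_inf'_iff _).2 fun r _ => hε r
  have hε0le : ∀ r : Fin ℓ, ε0 ≤ ε r := fun r =>
    Finset.inf'_le _ (Finset.mem_univ r)
  -- rescaled data
  set g : Fin ℓ → (Fin m → ℤ) → ℕ → ℂ :=
    fun r τ j => f r τ j * (Real.exp ((ε0 / 2) * wgt m n σ μ τ j) : ℂ) with hg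
  have hgadm : Admissible Q d lam g := by
    constructor
    · intro r s τ j
      simp only [hg]
      rw [← mul_assoc, ← mul_assoc, hf.1 r s τ j]
    · intro r τ j h
      simp only [hg, hf.2 r τ j h, zero_mul]
  have hggrow : ∀ r, GSGrowth m n σ μ (g r) := by
    intro r δ hδ
    refine ⟨C r, hC r, fun τ j => ?_⟩
    have h1 : ‖g r τ j‖
        = ‖f r τ j‖ * Real.exp ((ε0 / 2) * wgt m n σ μ τ j) := by
      rw [hg]
      rw [norm_mul, Complex.norm_real, Real.norm_eq_abs, abs_of_pos (Real.exp_pos _)]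
    rw [h1]
    have h2 := hbd r τ j
    have h3 : ‖f r τ j‖ * Real.exp ((ε0 / 2) * wgt m n σ μ τ j)
        ≤ C r * Real.exp (-ε r * wgt m n σ μ τ j) *
          Real.exp ((ε0 / 2) * wgt m n σ μ τ j) :=
      mul_le_mul_of_nonneg_right h2 (Real.exp_pos _).le
    refine h3.trans ?_
    rw [mul_assoc, ← Real.exp_add]
    gcongr
    · exact (hC r).le
    have : -ε r * wgt m n σ μ τ j + (ε0 / 2) * wgt m n σ μ τ j
        = (ε0 / 2 - ε r) * wgt m n σ μ τ j := by ring
    rw [this]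
    have hnp : (ε0 / 2 - ε r) * wgt m n σ μ τ j ≤ 0 := by
      apply mul_nonpos_of_nonpos_of_nonneg _ (hw τ j)
      have := hε0le r
      linarith
    have hδw : 0 ≤ δ * wgt m n σ μ τ j := mul_nonneg hδ.le (hw τ j)
    linarith
  obtain ⟨v, hvgrow, hvsol⟩ := hGS g hgadm hggrow
  refine ⟨fun τ j => v τ j * (Real.exp (-(ε0 / 2) * wgt m n σ μ τ j) : ℂ), ?_, ?_⟩
  · obtain ⟨C', hC', hvbd⟩ := hvgrow (ε0 / 4) (by linarith)
    refine ⟨C', hC', ε0 / 4, by linarith, fun τ j => ?_⟩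
    have h1 : ‖v τ j * (Real.exp (-(ε0 / 2) * wgt m n σ μ τ j) : ℂ)‖
        = ‖v τ j‖ * Real.exp (-(ε0 / 2) * wgt m n σ μ τ j) := by
      rw [norm_mul, Complex.norm_real, Real.norm_eq_abs, abs_of_pos (Real.exp_pos _)]
    rw [h1]
    have h3 : ‖v τ j‖ * Real.exp (-(ε0 / 2) * wgt m n σ μ τ j)
        ≤ C' * Real.exp ((ε0 / 4) * wgt m n σ μ τ j) *
          Real.exp (-(ε0 / 2) * wgt m n σ μ τ j) :=
      mul_le_mul_of_nonneg_right (hvbd τ j) (Real.exp_pos _).le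
    refine h3.trans ?_
    rw [mul_assoc, ← Real.exp_add]
    have : (ε0 / 4) * wgt m n σ μ τ j + -(ε0 / 2) * wgt m n σ μ τ j
        = -(ε0 / 4) * wgt m n σ μ τ j := by ring
    rw [this]
  · intro r τ j
    have := hvsol r τ j
    calc symb Q d lam r τ j *
          (v τ j * (Real.exp (-(ε0 / 2) * wgt m n σ μ τ j) : ℂ))
        = (symb Q d lam r τ j * v τ j) *
          (Real.exp (-(ε0 / 2) * wgt m n σ μ τ j) : ℂ) := by ring
      _ = g r τ j * (Real.exp (-(ε0 / 2) * wgt m n σ μ τ j) : ℂ) := by rw [this]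
      _ = f r τ j * ((Real.exp ((ε0 / 2) * wgt m n σ μ τ j) : ℂ) *
          (Real.exp (-(ε0 / 2) * wgt m n σ μ τ j) : ℂ)) := by rw [hg]; ring
      _ = f r τ j := by
          rw [← Complex.ofReal_mul, ← Real.exp_add]
          simp
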